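/- The equation x² + 1 = mᵗ has no solution in positive integers x, m, t with t > 1 and m > 1. -/

import Mathlib

lemma keydvd (s q r : ℕ) (hq4 : 4 ∣ q) (hq0 : 0 < q) (hr : 2 ≤ r) (hrs : r ≤ s) :
    2 ^ ((((2*s+1).choose 2) * q).factorization 2 + 1) ∣ (2*s+1).choose (2*r) * q ^ r := by
  set t := 2*s+1 with htdef
  have hc2 : t.choose 2 ≠ 0 := Nat.choose_pos (by omega) |>.ne'
  have hcr : t.choose (2*r) ≠ 0 := Nat.choose_pos (by omega) |>.ne'
  have hcr2 : (2*r).choose 2 ≠ 0 := Nat.choose_pos (by omega) |>.ne'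
  have hd : (t-2).choose (2*r-2) ≠ 0 := Nat.choose_pos (by omega) |>.ne'
  have hid : t.choose (2*r) * (2*r).choose 2 = t.choose 2 * (t-2).choose (2*r-2) :=
    Nat.choose_mul (by omega)
  have hu : 2 ≤ q.factorization 2 :=
    (Nat.Prime.pow_dvd_iff_le_factorization Nat.prime_two hq0.ne').mp (by simpa using hq4)
  rw [Nat.Prime.pow_dvd_iff_le_factorization Nat.prime_two
    (by positivity : (t.choose (2*r)) * q ^ r ≠ 0)]
  rw [Nat.factorization_mul hcr (by positivity), Nat.factorization_mul hc2 hq0.ne',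
    Nat.factorization_pow]
  simp only [Finsupp.coe_add, Pi.add_apply, Finsupp.coe_smul, Pi.smul_apply, smul_eq_mul]
  have hfac : (t.choose (2*r)).factorization 2 + ((2*r).choose 2).factorization 2
      = (t.choose 2).factorization 2 + ((t-2).choose (2*r-2)).factorization 2 := by
    have h := congrArg (fun n => n.factorization 2) hid
    simpa [Nat.factorization_mul hcr hcr2, Nat.factorization_mul hc2 hd] using h
  have hc2r : ((2*r).choose 2).factorization 2 = r.factorization 2 := by
    have e1 : (2*r).choose 2 = r * (2*r-1) := by
      rw [Nat.choose_two_right, show 2*r*(2*r-1) = r*(2*r-1)*2 by ring]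
      exact Nat.mul_div_cancel _ (by omega)
    rw [e1, Nat.factorization_mul (by omega) (by omega)]
    simp [Nat.factorization_eq_zero_of_not_dvd (show ¬ 2 ∣ 2*r-1 by omega)]
  have hvr : r.factorization 2 + 1 ≤ r := by
    have h1 : 2 ^ r.factorization 2 ≤ r := Nat.ordProj_le 2 (by omega)
    have h2 : r.factorization 2 < 2 ^ r.factorization 2 := Nat.lt_two_pow_self
    omega
  -- goal: c2f + qf + 1 ≤ crf + r * qf
  set u := q.factorization 2 with hudef
  have key : (r-1) * 2 ≤ (r-1) * u := Nat.mul_le_mul_left _ hu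
  have h3 : (r-1) * u = r * u - u := by rw [Nat.sub_one_mul]
  have h4 : u ≤ r * u := Nat.le_mul_of_pos_left _ (by omega)
  omega


lemma sum_range_two_mul {M : Type*} [AddCommMonoid M] (f : ℕ → M) (n : ℕ) :
    ∑ k ∈ Finset.range (2*n), f k = ∑ i ∈ Finset.range n, (f (2*i) + f (2*i+1)) := by
  induction n with
  | zero => simp
  | succ n ih =>
    rw [Finset.sum_range_succ, ← ih, show 2*(n+1) = (2*n)+1+1 from by omega,
      Finset.sum_range_succ, Finset.sum_range_succ, add_assoc]


lemma lebesgue_key (s q : ℕ) (hs : 1 ≤ s) (hq4 : 4 ∣ q) (hq0 : 0 < q) (b : ℤ)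
    (hb : b = 1 ∨ b = -1) :
    ∑ i ∈ Finset.range (s+1), (-1:ℤ)^(s-i) * ((2*s+1).choose (2*i) : ℤ) * (q:ℤ)^i ≠ b := by
  intro hS
  set t := 2*s+1 with htdef
  rw [Finset.sum_range_succ'] at hS
  simp only [Nat.sub_zero, pow_zero, mul_one, Nat.mul_zero, Nat.choose_zero_right,
    Nat.cast_one] at hS
  -- hS : ∑ i in range s, (-1)^(s-(i+1)) * C(t,2(i+1)) * q^(i+1) + (-1)^s = b
  have hq4' : (4:ℤ) ∣ (q:ℤ) := by exact_mod_cast hq4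
  have h4 : (4:ℤ) ∣ ∑ i ∈ Finset.range s,
      (-1:ℤ)^(s-(i+1)) * ((t.choose (2*(i+1))) : ℤ) * (q:ℤ)^(i+1) := by
    refine Finset.dvd_sum fun i _ => ?_
    exact Dvd.dvd.mul_left (hq4'.trans (dvd_pow_self _ (by omega))) _
  have hpm : (-1:ℤ)^s = 1 ∨ (-1:ℤ)^s = -1 := by
    rcases Nat.even_or_odd s with h | h
    · exact Or.inl h.neg_one_pow
    · exact Or.inr h.neg_one_pow
  have hzero : ∑ i ∈ Finset.range s,
      (-1:ℤ)^(s-(i+1)) * ((t.choose (2*(i+1))) : ℤ) * (q:ℤ)^(i+1) = 0 := by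
    set SS := ∑ i ∈ Finset.range s,
      (-1:ℤ)^(s-(i+1)) * ((t.choose (2*(i+1))) : ℤ) * (q:ℤ)^(i+1) with hSS
    omega
  obtain ⟨s', rfl⟩ : ∃ s', s = s'+1 := ⟨s-1, by omega⟩
  rw [Finset.sum_range_succ'] at hzero
  -- hzero : ∑ j in range s', g (j+1) + g 0 = 0
  set V := ((t.choose 2) * q).factorization 2 with hV
  have hDj : ∀ j ∈ Finset.range s', ((2:ℤ))^(V+1) ∣
      (-1:ℤ)^(s'+1-(j+1+1)) * ((t.choose (2*(j+1+1))) : ℤ) * (q:ℤ)^(j+1+1) := by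
    intro j hj
    have hjlt : j < s' := Finset.mem_range.mp hj
    have hk := keydvd (s'+1) q (j+2) hq4 hq0 (by omega) (by omega)
    have hk' : ((2:ℤ))^(V+1) ∣ ((t.choose (2*(j+2))) : ℤ) * (q:ℤ)^(j+2) := by
      have h := Int.natCast_dvd_natCast.mpr hk
      push_cast at h
      rw [hV, htdef]
      exact h
    have hrw : j+1+1 = j+2 := by omega
    have heq : (-1:ℤ)^(s'+1-(j+1+1)) * ((t.choose (2*(j+1+1))) : ℤ) * (q:ℤ)^(j+1+1)
        = (-1:ℤ)^(s'+1-(j+1+1)) * (((t.choose (2*(j+2))) : ℤ) * (q:ℤ)^(j+2)) := by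
      rw [hrw]; ring
    rw [heq]
    exact hk'.mul_left _
  have hD0 : ((2:ℤ))^(V+1) ∣ (-1:ℤ)^(s'+1-(0+1)) * ((t.choose (2*(0+1))) : ℤ) * (q:ℤ)^(0+1) := by
    have h1 : ((2:ℤ))^(V+1) ∣ ∑ j ∈ Finset.range s',
        (-1:ℤ)^(s'+1-(j+1+1)) * ((t.choose (2*(j+1+1))) : ℤ) * (q:ℤ)^(j+1+1) :=
      Finset.dvd_sum hDj
    have h2 : (-1:ℤ)^(s'+1-(0+1)) * ((t.choose (2*(0+1))) : ℤ) * (q:ℤ)^(0+1)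
        = - ∑ j ∈ Finset.range s',
        (-1:ℤ)^(s'+1-(j+1+1)) * ((t.choose (2*(j+1+1))) : ℤ) * (q:ℤ)^(j+1+1) := by
      linarith [hzero]
    rw [h2]
    exact h1.neg_right
  have hD : ((2:ℤ))^(V+1) ∣ ((t.choose 2 * q : ℕ) : ℤ) := by
    have he : ((-1:ℤ)^(s'+1-(0+1))) * ((-1:ℤ)^(s'+1-(0+1))) = 1 := by
      rw [← pow_add, ← two_mul, pow_mul]; norm_num
    have := hD0.mul_left ((-1:ℤ)^(s'+1-(0+1)))
    rw [← mul_assoc, ← mul_assoc, he, one_mul] at this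
    simpa [Nat.mul_one, mul_comm] using this
  have hfin : 2^(V+1) ∣ t.choose 2 * q := by exact_mod_cast hD
  have hne : t.choose 2 * q ≠ 0 := by
    have : 0 < t.choose 2 := Nat.choose_pos (by omega)
    positivity
  rw [Nat.Prime.pow_dvd_iff_le_factorization Nat.prime_two hne] at hfin
  omega


open Zsqrtd

local notation "ℤi" => GaussianInt

lemma gnorm_pow (z : ℤi) (n : ℕ) : (z^n).norm = z.norm^n := by
  induction n with
  | zero => simp [Zsqrtd.norm_one]
  | succ n ih => rw [pow_succ, pow_succ, Zsqrtd.norm_mul, ih]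

lemma gnorm_dvd {z w : ℤi} (h : z ∣ w) : z.norm ∣ w.norm := by
  obtain ⟨c, rfl⟩ := h
  exact ⟨c.norm, Zsqrtd.norm_mul z c⟩

def imAddHom : ℤi →+ ℤ where
  toFun := Zsqrtd.im
  map_zero' := rfl
  map_add' := fun _ _ => rfl

lemma intCast_mul_sqrtd_im (c : ℤ) : ((c:ℤi) * sqrtd).im = c := by
  simp [Zsqrtd.im_mul]

lemma unit_pow_four (u : ℤi) (hu : IsUnit u) : u^4 = 1 := by
  have hn : u.norm = 1 := (Zsqrtd.norm_eq_one_iff' (by norm_num) u).mpr hu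
  rw [Zsqrtd.norm_def] at hn
  -- hn : u.re * u.re - (-1) * u.im * u.im = 1
  have hre := mul_self_nonneg u.re
  have him := mul_self_nonneg u.im
  rcases eq_or_ne u.im 0 with h0 | h0
  · have h1 : u.re * u.re = 1 := by rw [h0] at hn; linarith
    have hu2 : u^2 = 1 := by
      have : u = (u.re : ℤi) := by
        ext <;> simp [h0]
      rw [this, ← Int.cast_pow, sq, h1, Int.cast_one]
    rw [show (4:ℕ) = 2*2 from rfl, pow_mul, hu2, one_pow]
  · have him1 : 1 ≤ u.im * u.im := by
      rcases lt_or_gt_of_ne h0 with h | h <;> nlinarith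
    have h2 : u.re * u.re = 0 := by nlinarith
    have h3 : u.re = 0 := by
      rcases mul_self_eq_zero.mp h2 with h; exact h
    have h4 : u.im * u.im = 1 := by linarith
    have hu2 : u^2 = -1 := by
      have hdec : u = sqrtd * (u.im : ℤi) := by
        ext <;> simp [h3]
      rw [hdec, mul_pow, sq, Zsqrtd.dmuld, ← Int.cast_pow, sq, h4]
      norm_num
    rw [show (4:ℕ) = 2*2 from rfl, pow_mul, hu2]
    norm_num


theorem lebesgue_odd (x m : ℕ) (hx : 0 < x) (hm : 1 < m) (hxe : x % 2 = 0)
    (s : ℕ) (hs : 1 ≤ s) (heq : x^2 + 1 = m^(2*s+1)) : False := by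
  set t := 2*s+1 with htdef
  have ht1 : 1 ≤ t := by omega
  -- m is odd
  have hxt : (x^2+1) % 2 = 1 := by
    obtain ⟨x', rfl⟩ : ∃ x', x = 2*x' := ⟨x/2, by omega⟩
    have : (2*x')^2 = 2*(2*x'*x') := by ring
    omega
  have hmodd : m % 2 = 1 := by
    rcases Nat.even_or_odd m with h | h
    · exfalso
      obtain ⟨m', rfl⟩ := h
      have h2 : (2:ℕ) ∣ m' + m' := ⟨m', by omega⟩
      have h4 : 2 ∣ (m'+m')^t := dvd_pow h2 (by omega)
      omega
    · exact Nat.odd_iff.mp h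
  -- Gaussian integer setup
  set X : ℤi := ⟨(x:ℤ), 1⟩ with hXdef
  have hnormX : X.norm = ((m^t : ℕ) : ℤ) := by
    rw [Zsqrtd.norm_def, ← heq]
    push_cast
    ring
  have hprod : X * star X = ((m:ℤi))^t := by
    have h1 := Zsqrtd.norm_eq_mul_conj X
    rw [hnormX] at h1
    rw [← h1]
    push_cast
    ring
  have hcop : IsCoprime X (star X) := by
    apply IsRelPrime.isCoprime
    intro z hz1 hz2
    have h1 : z.norm ∣ ((m^t : ℕ) : ℤ) := hnormX ▸ gnorm_dvd hz1
    have h2 : z.norm ∣ (4:ℤ) := by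
      have hsub : z ∣ X - star X := dvd_sub hz1 hz2
      have : (X - star X).norm = 4 := by
        rw [Zsqrtd.norm_def]
        simp [hXdef, Zsqrtd.star_mk]
      exact this ▸ gnorm_dvd hsub
    rw [← Zsqrtd.norm_eq_one_iff]
    have h1' : z.norm.natAbs ∣ m^t := by
      rwa [Int.natCast_dvd_natCast.symm, Int.natAbs_dvd]
    have h2' : z.norm.natAbs ∣ 4 := by
      have := Int.natAbs_dvd_natAbs.mpr h2
      simpa using this
    obtain ⟨i, hi, hzi⟩ := (Nat.dvd_prime_pow Nat.prime_two).mp (by simpa using h2' : z.norm.natAbs ∣ 2^2)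
    rcases Nat.eq_zero_or_pos i with h0 | h0
    · simp [h0] at hzi; exact hzi
    · exfalso
      have h2dvd : 2 ∣ m^t := (hzi ▸ dvd_pow_self 2 (by omega)).trans h1' |>.elim (fun c hc => ⟨c, hc⟩)
      have : m^t % 2 = 1 := Nat.odd_iff.mp (Odd.pow (Nat.odd_iff.mpr hmodd))
      omega
  -- extract t-th root
  obtain ⟨w, hw⟩ : ∃ w : ℤi, w ^ t = X := by
    obtain ⟨z, hz⟩ := exists_associated_pow_of_mul_eq_pow' hcop hprod
    obtain ⟨uu, huu⟩ := hz
    refine ⟨z * (uu:ℤi)^t, ?_⟩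
    have h4 : ((uu:ℤi))^4 = 1 := by
      have := unit_pow_four (uu:ℤi) uu.isUnit
      exact this
    obtain ⟨k, hk⟩ : ∃ k, t*t = 4*k+1 := ⟨s*s+s, by rw [htdef]; ring⟩
    have hup : ((uu:ℤi))^(t*t) = (uu:ℤi) := by
      rw [hk]
      have h5 : ((uu:ℤi))^(4*k+1) = (((uu:ℤi))^4)^k * (uu:ℤi) := by
        rw [pow_succ, pow_mul]
      rw [h5, h4, one_pow, one_mul]
    calc (z * (uu:ℤi)^t)^t = z^t * ((uu:ℤi))^(t*t) := by rw [mul_pow, ← pow_mul]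
      _ = z^t * (uu:ℤi) := by rw [hup]
      _ = X := huu
  set a : ℤ := w.re with hadef
  set b : ℤ := w.im with hbdef
  -- b = ± 1
  have hb : b = 1 ∨ b = -1 := by
    have hdvd : ((b:ℤi) * sqrtd) ∣ X - ((a^t : ℤ) : ℤi) := by
      have h := sub_dvd_pow_sub_pow w ((a:ℤi)) t
      rw [hw] at h
      have e1 : w - (a:ℤi) = (b:ℤi) * sqrtd := by
        ext <;> simp [Zsqrtd.re_sub, Zsqrtd.im_sub, Zsqrtd.re_mul, Zsqrtd.im_mul,
          Zsqrtd.re_intCast, Zsqrtd.im_intCast, Zsqrtd.re_sqrtd, Zsqrtd.im_sqrtd, hadef, hbdef]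
      have e2 : ((a:ℤi))^t = ((a^t : ℤ) : ℤi) := by push_cast; ring
      rwa [e1, e2] at h
    obtain ⟨c, hc⟩ := hdvd
    have hpow_im : (((a:ℤi))^t).im = 0 := by
      rw [show ((a:ℤi))^t = ((a^t : ℤ):ℤi) by push_cast; ring, Zsqrtd.im_intCast]
    have him : (X - ((a^t : ℤ) : ℤi)).im = 1 := by
      rw [Zsqrtd.im_sub]
      rw [show ((a^t : ℤ):ℤi) = ((a:ℤi))^t by push_cast; ring, hpow_im]
      simp [hXdef]
    rw [hc] at him
    rw [mul_assoc, Zsqrtd.im_smul] at him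
    have : b * (sqrtd * c).im = 1 := him
    exact Int.isUnit_iff.mp (IsUnit.of_mul_eq_one _ this)
  have hbb : b * b = 1 := by rcases hb with h | h <;> rw [h] <;> norm_num
  -- norm of w is m
  have hnw : w.norm = (m:ℤ) := by
    have h1 : w.norm ^ t = ((m:ℕ):ℤ)^t := by
      rw [← gnorm_pow, hw, hnormX]; push_cast; ring
    have h2 : 0 ≤ w.norm := Zsqrtd.norm_nonneg (by norm_num) w
    obtain ⟨n, hn⟩ := Int.eq_ofNat_of_zero_le h2
    rw [hn] at h1 ⊢
    norm_cast
    have h3 : n^t = m^t := by exact_mod_cast h1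
    exact Nat.pow_left_injective (by omega) h3
  have haa : a * a = (m:ℤ) - 1 := by
    have hh := Zsqrtd.norm_def w
    rw [hnw] at hh
    nlinarith [hbb, hh]
  -- q := m - 1
  have hq4' : (4:ℤ) ∣ a * a := by
    have haev : (2:ℤ) ∣ a := by
      have hme : (2:ℤ) ∣ (m:ℤ) - 1 := by
        obtain ⟨m', hm'⟩ : ∃ m', m = 2*m'+1 := ⟨m/2, by omega⟩
        rw [hm']; push_cast; exact ⟨m', by ring⟩
      have h2 : (2:ℤ) ∣ a * a := haa ▸ hme
      rcases (Int.Prime.dvd_mul' Nat.prime_two h2) with h | h <;> exact h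
    obtain ⟨a', ha'⟩ := haev
    exact ⟨a'*a', by rw [ha']; ring⟩
  set q : ℕ := m - 1 with hqdef
  have hqz : (q:ℤ) = a * a := by
    rw [hqdef, Nat.cast_sub (by omega), haa]; norm_num
  have hq4 : 4 ∣ q := by
    have h := hqz ▸ hq4'
    exact_mod_cast h
  have hq0 : 0 < q := by omega
  -- binomial expansion
  have hwdec : w = (a:ℤi) + (b:ℤi) * sqrtd := by
    ext <;> simp [Zsqrtd.re_add, Zsqrtd.im_add, Zsqrtd.re_mul, Zsqrtd.im_mul,
      Zsqrtd.re_intCast, Zsqrtd.im_intCast, Zsqrtd.re_sqrtd, Zsqrtd.im_sqrtd, hadef, hbdef]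
  have hbs : ((b:ℤi)*sqrtd)^2 = -1 := by
    rw [mul_pow, sq, sq, Zsqrtd.dmuld]
    rw [show ((b:ℤi))*(b:ℤi) = ((b*b : ℤ) : ℤi) by push_cast; ring, hbb]
    norm_num
  have hexp : (1:ℤ) = ∑ k ∈ Finset.range (t+1),
      ((a:ℤi)^k * ((b:ℤi)*sqrtd)^(t-k) * ((t.choose k : ℕ) : ℤi)).im := by
    have h := add_pow (a:ℤi) ((b:ℤi)*sqrtd) t
    rw [← hwdec] at h
    have him : (w^t).im = 1 := by rw [hw, hXdef]
    have h3 : (w^t).im = ∑ k ∈ Finset.range (t+1),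
        ((a:ℤi)^k * ((b:ℤi)*sqrtd)^(t-k) * ((t.choose k : ℕ) : ℤi)).im := by
      rw [h]
      exact (map_sum imAddHom _ _)
    rw [← h3, him]
  rw [show t+1 = 2*(s+1) by omega, sum_range_two_mul] at hexp
  have hterm : ∀ i ∈ Finset.range (s+1),
      (((a:ℤi)^(2*i) * ((b:ℤi)*sqrtd)^(t-2*i) * ((t.choose (2*i) : ℕ) : ℤi)).im
      + ((a:ℤi)^(2*i+1) * ((b:ℤi)*sqrtd)^(t-(2*i+1)) * ((t.choose (2*i+1) : ℕ) : ℤi)).im)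
      = a^(2*i) * (-1:ℤ)^(s-i) * b * (t.choose (2*i) : ℤ) := by
    intro i hi
    have hi' : i ≤ s := by have := Finset.mem_range.mp hi; omega
    have e1 : t - 2*i = 2*(s-i)+1 := by omega
    have e2 : t - (2*i+1) = 2*(s-i) := by omega
    have p1 : ((b:ℤi)*sqrtd)^(t-2*i) = ((((-1:ℤ))^(s-i) * b : ℤ) : ℤi) * sqrtd := by
      rw [e1, pow_succ, pow_mul, hbs]
      push_cast
      ring
    have p2 : ((b:ℤi)*sqrtd)^(t-(2*i+1)) = (((-1:ℤ)^(s-i) : ℤ) : ℤi) := by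
      rw [e2, pow_mul, hbs]
      push_cast
      ring
    rw [p1, p2]
    have q1 : (a:ℤi)^(2*i) * (((((-1:ℤ))^(s-i) * b : ℤ) : ℤi) * sqrtd) * ((t.choose (2*i) : ℕ) : ℤi)
        = ((a^(2*i) * (-1:ℤ)^(s-i) * b * (t.choose (2*i) : ℤ) : ℤ) : ℤi) * sqrtd := by
      push_cast; ring
    have q2 : (a:ℤi)^(2*i+1) * ((((-1:ℤ)^(s-i) : ℤ)) : ℤi) * ((t.choose (2*i+1) : ℕ) : ℤi)
        = ((a^(2*i+1) * (-1:ℤ)^(s-i) * (t.choose (2*i+1) : ℤ) : ℤ) : ℤi) := by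
      push_cast; ring
    rw [q1, q2, intCast_mul_sqrtd_im, Zsqrtd.im_intCast, add_zero]
  rw [Finset.sum_congr rfl hterm] at hexp
  have hfin : ∑ i ∈ Finset.range (s+1),
      (-1:ℤ)^(s-i) * ((2*s+1).choose (2*i) : ℤ) * (q:ℤ)^i = b := by
    rw [← htdef]
    calc ∑ i ∈ Finset.range (s+1), (-1:ℤ)^(s-i) * ((t).choose (2*i) : ℤ) * (q:ℤ)^i
        = ∑ i ∈ Finset.range (s+1),
          b * (a^(2*i) * (-1:ℤ)^(s-i) * b * (t.choose (2*i) : ℤ)) := by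
          refine Finset.sum_congr rfl fun i _ => ?_
          have e3 : a^(2*i) = ((q:ℤ))^i := by rw [hqz, pow_mul, sq]
          rw [e3]
          linear_combination (-((q:ℤ)^i * (-1:ℤ)^(s-i) * ((t.choose (2*i) : ℕ) : ℤ))) * hbb
      _ = b * ∑ i ∈ Finset.range (s+1),
          (a^(2*i) * (-1:ℤ)^(s-i) * b * (t.choose (2*i) : ℤ)) := by rw [Finset.mul_sum]
      _ = b * 1 := by rw [← hexp]
      _ = b := mul_one b
  exact lebesgue_key s q hs hq4 hq0 b hb hfin


theorem stmt_10 (x m t : ℕ) (hx : 0 < x) (hm : 1 < m) (ht : 1 < t) :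
    x^2 + 1 ≠ m^t := by
  intro heq
  rcases Nat.even_or_odd t with hev | hodd
  · obtain ⟨u, rfl⟩ := hev
    have hu : 1 ≤ u := by omega
    have hpow : m^(u+u) = (m^u)^2 := by rw [← pow_mul]; congr 1; omega
    have h2 : x^2 < (m^u)^2 := by rw [← hpow, ← heq]; omega
    have hlt : x < m^u := lt_of_pow_lt_pow_left₀ 2 (Nat.zero_le _) h2
    have h3 : (x+1)^2 ≤ (m^u)^2 := Nat.pow_le_pow_left (by omega) 2
    nlinarith [heq, hpow]
  · obtain ⟨s, hts⟩ := hodd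
    have hs : 1 ≤ s := by omega
    have hxe : x % 2 = 0 := by
      rcases Nat.even_or_odd x with h | h
      · exact Nat.even_iff.mp h
      · exfalso
        obtain ⟨l, rfl⟩ := h
        have hx2 : (2*l+1)^2 + 1 = 4*(l*l+l)+2 := by ring
        rcases Nat.even_or_odd m with hm2 | hm2
        · obtain ⟨m', rfl⟩ := hm2
          have h4 : 4 ∣ (m'+m')^t := by
            have h5 : (m'+m')^t = (m'+m')^2 * (m'+m')^(t-2) := by
              rw [← pow_add]; congr 1; omega
            rw [h5]
            exact Dvd.dvd.mul_right ⟨m'*m', by ring⟩ _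
          omega
        · have h5 : (m^t) % 2 = 1 := Nat.odd_iff.mp (hm2.pow)
          omega
    rw [hts] at heq
    exact lebesgue_odd x m hx hm hxe s hs heq
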